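/- Define g_D(s) = (μ(s) − D)/(k μ'(s)) + D(s_in − s)/(k μ(s)) and h^b_D(s) = D(s_in − s_b(D))/(k μ(s)). Then for all s ∈ (s̄, s_in), g_D(s) ≤ h^b_D(s). -/

import Mathlib

/-- On (s̄, s_in), the nullcline ẏ = 0 is below the isoline y = y_b(D):
g_D(s) ≤ h^b_D(s). -/
theorem nullcline_below_isoline_b (μbar kS kI k sin D sb : ℝ) (hμbar : 0 < μbar)
    (hkS : 0 < kS) (hkI : 0 < kI) (hk : 0 < k)
    (hsbar : Real.sqrt (kS * kI) < sin)
    (μ dμ : ℝ → ℝ)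
    (hμ : ∀ s : ℝ, μ s = μbar * s / (kS + s + s ^ 2 / kI))
    (hdμ : ∀ s : ℝ, 0 < s → HasDerivAt μ (dμ s) s)
    (hD0 : 0 < D) (hD : D < μ (Real.sqrt (kS * kI)))
    (hsb1 : Real.sqrt (kS * kI) < sb) (hroot : μ sb = D) :
    ∀ s : ℝ, Real.sqrt (kS * kI) < s → s < sin →
      (μ s - D) / (k * dμ s) + D * (sin - s) / (k * μ s)
        ≤ D * (sin - sb) / (k * μ s) := by
  intro s hs1 hs2
  have hsqrt_pos : 0 < Real.sqrt (kS * kI) :=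
    Real.sqrt_pos.mpr (mul_pos hkS hkI)
  have hs0 : 0 < s := hsqrt_pos.trans hs1
  have hsb0 : 0 < sb := hsqrt_pos.trans hsb1
  have hs2' : kS * kI < s ^ 2 := (Real.sqrt_lt' hs0).mp hs1
  set qs : ℝ := kS + s + s ^ 2 / kI with hqs_def
  set qb : ℝ := kS + sb + sb ^ 2 / kI with hqb_def
  have hqs : 0 < qs := by positivity
  have hqb : 0 < qb := by positivity
  have hμs : μ s = μbar * s / qs := hμ s
  have hD' : D = μbar * sb / qb := by rw [← hroot, hμ sb]
  have hμspos : 0 < μ s := by rw [hμs]; positivity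
  -- compute the derivative
  have hden : HasDerivAt (fun x : ℝ => kS + x + x ^ 2 / kI) (1 + 2 * s / kI) s := by
    have h2 := (hasDerivAt_pow 2 s).div_const kI
    have h1 := ((hasDerivAt_id s).const_add kS).add h2
    simpa [mul_comm, Pi.add_def] using h1
  have hnum : HasDerivAt (fun x : ℝ => μbar * x) μbar s := by
    simpa using (hasDerivAt_id s).const_mul μbar
  have hderval : HasDerivAt (fun x : ℝ => μbar * x / (kS + x + x ^ 2 / kI))
      ((μbar * qs - μbar * s * (1 + 2 * s / kI)) / qs ^ 2) s :=
    hnum.div hden hqs.ne'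
  have hμfun : μ = fun x : ℝ => μbar * x / (kS + x + x ^ 2 / kI) := funext hμ
  have hderμ : HasDerivAt μ ((μbar * qs - μbar * s * (1 + 2 * s / kI)) / qs ^ 2) s := by
    rw [hμfun]; exact hderval
  have hd : dμ s = μbar * (kS - s ^ 2 / kI) / qs ^ 2 := by
    have := (hdμ s hs0).unique hderμ
    rw [this, hqs_def]
    field_simp
    ring
  have hdneg : dμ s < 0 := by
    rw [hd]
    have h1 : kS - s ^ 2 / kI < 0 := by
      rw [sub_neg, lt_div_iff₀ hkI]
      nlinarith
    have := mul_neg_of_pos_of_neg hμbar h1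
    exact div_neg_of_neg_of_pos this (by positivity)
  -- key algebraic identity
  have key : μ s * (μ s - D) - D * (s - sb) * dμ s
      = μbar ^ 2 * kS * (s - sb) ^ 2 / (qs ^ 2 * qb) := by
    rw [hμs, hD', hd, hqs_def, hqb_def]
    field_simp
    ring
  have hpos : 0 ≤ μ s * (μ s - D) - D * (s - sb) * dμ s := by
    rw [key]; positivity
  -- reduce to the single-fraction inequality
  have hB : k * dμ s < 0 := mul_neg_of_pos_of_neg hk hdneg
  have hE : 0 < k * μ s := mul_pos hk hμspos
  suffices h : (μ s - D) / (k * dμ s) ≤ D * (s - sb) / (k * μ s) by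
    have hsplit : D * (sin - sb) / (k * μ s)
        = D * (s - sb) / (k * μ s) + D * (sin - s) / (k * μ s) := by
      rw [← add_div]; ring_nf
    rw [hsplit]; linarith
  rw [show (μ s - D) / (k * dμ s) = (-(μ s - D)) / (-(k * dμ s)) by
    rw [neg_div_neg_eq]]
  rw [div_le_div_iff₀ (by linarith) hE]
  nlinarith [mul_nonneg hk.le hpos]
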